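/- In the Zhang model with N = 2, E_c = ε = 1/3, the two avalanche maps have linear parts L₁₁ = (1/9)[[2,3],[2,3]] and L₁₂ = (2/27)[[2,3],[2,3]] (and symmetric for site 2); all images lie on the diagonal {x₁ = x₂}, and both maps restricted to the diagonal have the common fixed point P = (4/17, 4/17), which attracts every diagonal orbit. Hence the spatial attractor is the single point P. -/
import Mathlib


open Filter

/-- The avalanche return map for excitation of site 1 in the `N = 2` Zhang model
with `E_c = ε = 1/3`: the linear parts are `L₁₁ = (1/9)[[2,3],[2,3]]` on
`M₁₁ = {y ≤ -2x/3 + 1/3}` and `L₁₂ = (2/27)[[2,3],[2,3]]` on the complement,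
applied to `x + e₁`. -/
noncomputable def G1 (x : ℝ × ℝ) : ℝ × ℝ :=
  let y : ℝ × ℝ := (x.1 + 1, x.2)
  let s : ℝ := 2 * y.1 + 3 * y.2
  if x.2 ≤ -2 * x.1 / 3 + 1 / 3 then (s / 9, s / 9) else (2 * s / 27, 2 * s / 27)

/-- The avalanche return map for excitation of site 2, symmetric to `G1`. -/
noncomputable def G2 (x : ℝ × ℝ) : ℝ × ℝ :=
  let y : ℝ × ℝ := (x.1, x.2 + 1)
  let s : ℝ := 3 * y.1 + 2 * y.2
  if x.1 ≤ -2 * x.2 / 3 + 1 / 3 then (s / 9, s / 9) else (2 * s / 27, 2 * s / 27)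

/-- Random orbit of the skew-product dynamics determined by a sequence of excitations. -/
noncomputable def orbit (t : ℕ → Bool) (x : ℝ × ℝ) : ℕ → ℝ × ℝ
  | 0 => x
  | n + 1 => (if t n then G1 else G2) (orbit t x n)

lemma G1_mem {x : ℝ × ℝ} (hx : x ∈ Set.Icc (0:ℝ) (1/3) ×ˢ Set.Icc (0:ℝ) (1/3)) :
    (G1 x).1 = (G1 x).2 ∧ (G1 x).1 ∈ Set.Icc (2/9:ℝ) (1/3) := by
  obtain ⟨⟨h1, h2⟩, h3, h4⟩ := hx
  unfold G1
  split <;> rename_i h <;> (try push_neg at h) <;>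
    refine ⟨rfl, ?_, ?_⟩ <;> simp only [] <;> nlinarith

lemma G2_mem {x : ℝ × ℝ} (hx : x ∈ Set.Icc (0:ℝ) (1/3) ×ˢ Set.Icc (0:ℝ) (1/3)) :
    (G2 x).1 = (G2 x).2 ∧ (G2 x).1 ∈ Set.Icc (2/9:ℝ) (1/3) := by
  obtain ⟨⟨h1, h2⟩, h3, h4⟩ := hx
  unfold G2
  split <;> rename_i h <;> (try push_neg at h) <;>
    refine ⟨rfl, ?_, ?_⟩ <;> simp only [] <;> nlinarith

lemma G1_diag {a : ℝ} (ha : a ∈ Set.Icc (2/9:ℝ) (1/3)) :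
    G1 (a, a) = ((10*a+4)/27, (10*a+4)/27) := by
  obtain ⟨h1, h2⟩ := ha
  unfold G1
  rw [if_neg (by simp only []; nlinarith)]
  simp only []
  ring_nf

lemma G2_diag {a : ℝ} (ha : a ∈ Set.Icc (2/9:ℝ) (1/3)) :
    G2 (a, a) = ((10*a+4)/27, (10*a+4)/27) := by
  obtain ⟨h1, h2⟩ := ha
  unfold G2
  rw [if_neg (by simp only []; nlinarith)]
  simp only []
  ring_nf

lemma diag_mem {a : ℝ} (ha : a ∈ Set.Icc (2/9:ℝ) (1/3)) :
    (10*a+4)/27 ∈ Set.Icc (2/9:ℝ) (1/3) := by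
  obtain ⟨h1, h2⟩ := ha
  constructor <;> nlinarith

theorem zhang_third_third_point_attractor :
    (∀ x : ℝ × ℝ, (G1 x).1 = (G1 x).2 ∧ (G2 x).1 = (G2 x).2) ∧
      G1 (4/17, 4/17) = (4/17, 4/17) ∧ G2 (4/17, 4/17) = (4/17, 4/17) ∧
      (∀ (t : ℕ → Bool) (x : ℝ × ℝ), x ∈ Set.Icc (0:ℝ) (1/3) ×ˢ Set.Icc (0:ℝ) (1/3) →
        Tendsto (orbit t x) atTop (nhds ((4/17 : ℝ), (4/17 : ℝ)))) := by
  refine ⟨?_, ?_, ?_, ?_⟩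
  · intro x
    constructor
    · unfold G1; split <;> rfl
    · unfold G2; split <;> rfl
  · unfold G1; rw [if_neg (by norm_num)]; norm_num
  · unfold G2; rw [if_neg (by norm_num)]; norm_num
  · intro t x hx
    have key : ∀ n : ℕ, ∃ a : ℝ, a ∈ Set.Icc (2/9:ℝ) (1/3) ∧
        orbit t x (n + 1) = (a, a) ∧ |a - 4/17| ≤ (10/27 : ℝ) ^ n := by
      intro n
      induction n with
      | zero =>
        refine ⟨(orbit t x 1).1, ?_, ?_, ?_⟩
        · show (orbit t x 1).1 ∈ _
          simp only [orbit]
          cases t 0 with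
          | false => simpa using (G2_mem hx).2
          | true => simpa using (G1_mem hx).2
        · have hd : (orbit t x 1).1 = (orbit t x 1).2 := by
            simp only [orbit]
            cases t 0 with
            | false => simpa using (G2_mem hx).1
            | true => simpa using (G1_mem hx).1
          exact Prod.ext rfl hd.symm
        · have : (orbit t x 1).1 ∈ Set.Icc (2/9:ℝ) (1/3) := by
            simp only [orbit]
            cases t 0 with
            | false => simpa using (G2_mem hx).2
            | true => simpa using (G1_mem hx).2
          obtain ⟨h1, h2⟩ := this
          rw [pow_zero, abs_le]
          constructor <;> nlinarith
      | succ n ih =>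
        obtain ⟨a, ha, horb, hb⟩ := ih
        refine ⟨(10*a+4)/27, diag_mem ha, ?_, ?_⟩
        · show (if t (n+1) then G1 else G2) (orbit t x (n+1)) = _
          rw [horb]
          cases t (n+1) with
          | false => simpa using G2_diag ha
          | true => simpa using G1_diag ha
        · have : (10*a+4)/27 - 4/17 = (10/27) * (a - 4/17) := by ring
          rw [this, abs_mul, pow_succ]
          rw [abs_of_nonneg (by norm_num : (0:ℝ) ≤ 10/27)]
          calc (10/27 : ℝ) * |a - 4/17| ≤ (10/27) * (10/27)^n := by
                exact mul_le_mul_of_nonneg_left hb (by norm_num)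
        _ = (10/27)^n * (10/27) := by ring
    choose c hc1 hc2 hc3 using key
    have hcT : Tendsto c atTop (nhds (4/17 : ℝ)) := by
      have h0 : Tendsto (fun n => ((10:ℝ)/27) ^ n) atTop (nhds 0) :=
        tendsto_pow_atTop_nhds_zero_of_lt_one (by norm_num) (by norm_num)
      have habs : Tendsto (fun n => |c n - 4/17|) atTop (nhds 0) :=
        squeeze_zero (fun n => abs_nonneg _) hc3 h0
      have : Tendsto (fun n => c n - 4/17) atTop (nhds 0) :=
        (tendsto_zero_iff_abs_tendsto_zero _).2 habs
      have := this.add_const (4/17 : ℝ)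
      simpa using this
    have hT : Tendsto (fun n => orbit t x (n + 1)) atTop
        (nhds ((4/17 : ℝ), (4/17 : ℝ))) := by
      have : (fun n => orbit t x (n + 1)) = fun n => (c n, c n) := by
        funext n; exact hc2 n
      rw [this]
      exact hcT.prodMk_nhds hcT
    exact (tendsto_add_atTop_iff_nat 1).1 hT
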